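/- Let $q$ be a nonzero complex number that is not a root of unity, and let $m \geq l \geq 0$ be integers. Fix $\beta, \gamma \in \mathbb{Z}_{\geq 0}^{n+1}$ with $|\beta| = m$, $|\gamma| = l$ and $\gamma_i \leq \beta_i$ for all $i$. For a real parameter $t$, set $c_i = t(n+1-i) + \tilde{c}_i$ for fixed integers $\tilde{c}_i$, and define $$S(t) = \binom{m}{l}_q^{-1} \prod_{1\le i,j\le n+1} \frac{(q^{c_i-c_j-\gamma_i+\beta_j+1};q)_{\gamma_i}}{(q^{c_i-c_j-\gamma_i+\gamma_j+1};q)_{\gamma_i}}.$$ If $|q| < 1$, then $$\lim_{t \to \infty} S(t) = q^{\sum_{1\le i<j\le n+1}(\beta_i-\gamma_i)\gamma_j}\, \binom{m}{l}_q^{-1} \prod_{i=1}^{n+1}\binom{\beta_i}{\gamma_i}_q.$$ -/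

import Mathlib

set_option autoImplicit false

/-- The real q-Pochhammer symbol `(x;q)_m = ∏_{k=0}^{m-1} (1 - x qᵏ)`. -/
noncomputable def qPochR (q x : ℝ) (m : ℕ) : ℝ := ∏ k ∈ Finset.range m, (1 - x * q ^ k)

/-- The Gaussian (q-)binomial coefficient. -/
noncomputable def qBinomR (q : ℝ) (m l : ℕ) : ℝ :=
  if l ≤ m then qPochR q q m / (qPochR q q l * qPochR q q (m - l)) else 0

open Filter Real Finset

lemma qPochR_pos (q : ℝ) (h0 : 0 < q) (h1 : q < 1) (m : ℕ) : 0 < qPochR q q m := by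
  apply Finset.prod_pos
  intro k _
  nlinarith [pow_pos h0 k, pow_le_one₀ h0.le h1.le (n := k)]

lemma qPochR_split (q : ℝ) (d g : ℕ) :
    qPochR q q (d + g) = qPochR q q d * qPochR q (q ^ (d + 1)) g := by
  unfold qPochR
  rw [Finset.prod_range_add]
  congr 1
  refine Finset.prod_congr rfl fun k _ => ?_
  rw [pow_add]
  ring

lemma qBinomR_eq (q : ℝ) (h0 : 0 < q) (h1 : q < 1) (b g : ℕ) (hg : g ≤ b) :
    qBinomR q b g = qPochR q (q ^ (b - g + 1)) g / qPochR q q g := by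
  have h := qPochR_split q (b - g) g
  rw [Nat.sub_add_cancel hg] at h
  rw [qBinomR, if_pos hg, h]
  have h1' := (qPochR_pos q h0 h1 (b - g)).ne'
  have h2' := (qPochR_pos q h0 h1 g).ne'
  field_simp

lemma tendsto_ratio (a b : ℝ) (hb : 0 < b) :
    Tendsto (fun u : ℝ => (1 - u * a) / (1 - u * b)) atTop (nhds (a / b)) := by
  have h : Tendsto (fun u : ℝ => (u⁻¹ - a) / (u⁻¹ - b)) atTop (nhds (a / b)) := by
    have := (tendsto_inv_atTop_zero.sub (tendsto_const_nhds (x := a))).div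
      (tendsto_inv_atTop_zero.sub (tendsto_const_nhds (x := b))) (by simpa using hb.ne')
    simpa [neg_div_neg_eq, Pi.div_def] using this
  refine h.congr' ?_
  filter_upwards [eventually_gt_atTop 0] with u hu
  have h1 : 1 - u * a = u * (u⁻¹ - a) := by field_simp
  have h2 : 1 - u * b = u * (u⁻¹ - b) := by field_simp
  rw [h1, h2, mul_div_mul_left _ _ hu.ne']

noncomputable def Lfun (q : ℝ) {N : ℕ} (β γ : Fin N → ℕ) (i j : Fin N) : ℝ :=
  if i = j then qBinomR q (β i) (γ i) else
    if j < i then q ^ (γ i * (β j - γ j)) else 1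

set_option maxHeartbeats 1000000 in
/-- the vertex-model limit (Proposition 4 of the paper).
Here `q ∈ (0,1)` is real, `c i = t(n+1-i) + c̃ i` with integers `c̃ i`, and
`q ^ c` denotes `Real.rpow`. -/
theorem stmt_3 (q : ℝ) (hq0 : 0 < q) (hq1 : q < 1)
    (n : ℕ) (m l : ℕ) (hl : l ≤ m)
    (β γ : Fin (n + 1) → ℕ) (hβ : ∑ i, β i = m) (hγ : ∑ i, γ i = l)
    (hγβ : ∀ i, γ i ≤ β i)
    (ct : Fin (n + 1) → ℤ)
    (c : ℝ → Fin (n + 1) → ℝ)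
    (hc : ∀ t i, c t i = t * ((n + 1) - ((i : ℕ) + 1)) + ct i)
    (S : ℝ → ℝ)
    (hS : ∀ t, S t = (qBinomR q m l)⁻¹ *
      ∏ i, ∏ j,
        qPochR q (q ^ (c t i - c t j - (γ i : ℝ) + (β j : ℝ) + 1)) (γ i) /
          qPochR q (q ^ (c t i - c t j - (γ i : ℝ) + (γ j : ℝ) + 1)) (γ i)) :
    Filter.Tendsto S Filter.atTop
      (nhds (q ^ (∑ p ∈ Finset.univ.filter (fun p : Fin (n+1) × Fin (n+1) => p.1 < p.2),
          (β p.1 - γ p.1) * γ p.2) *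
        (qBinomR q m l)⁻¹ * ∏ i, qBinomR q (β i) (γ i))) := by
  classical
  -- difference of c's
  have hce : ∀ (t : ℝ) (i j : Fin (n+1)),
      c t i - c t j = t * ((j : ℕ) - (i : ℕ) : ℝ) + ((ct i : ℝ) - (ct j : ℝ)) := by
    intro t i j
    rw [hc, hc]
    push_cast
    ring
  -- continuity of the q-Pochhammer in x
  have hcont : ∀ g : ℕ, Continuous fun x : ℝ => qPochR q x g := by
    intro g
    exact continuous_finset_prod _ fun k _ =>
      continuous_const.sub (continuous_id.mul continuous_const)
  have hpoch0 : ∀ g : ℕ, qPochR q 0 g = 1 := by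
    intro g; simp [qPochR]
  -- key convergence of each factor
  have key : ∀ i j, Tendsto (fun t =>
      qPochR q (q ^ (c t i - c t j - (γ i : ℝ) + (β j : ℝ) + 1)) (γ i) /
        qPochR q (q ^ (c t i - c t j - (γ i : ℝ) + (γ j : ℝ) + 1)) (γ i)) atTop
      (nhds (Lfun q β γ i j)) := by
    intro i j
    rcases lt_trichotomy i j with hij | heq | hij
    · -- i < j : both Pochhammers tend to 1
      have hLij : Lfun q β γ i j = 1 := by
        simp [Lfun, hij.ne, not_lt.mpr hij.le]
      rw [hLij]
      have hslope : (0 : ℝ) < ((j : ℕ) : ℝ) - ((i : ℕ) : ℝ) := by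
        have : (i : ℕ) < (j : ℕ) := hij
        have h2 : ((i : ℕ) : ℝ) < ((j : ℕ) : ℝ) := by exact_mod_cast this
        linarith
      have hE : ∀ (d : ℝ), Tendsto (fun t => c t i - c t j - (γ i : ℝ) + d + 1) atTop atTop := by
        intro d
        have h1 : Tendsto (fun t : ℝ => t * (((j : ℕ) : ℝ) - ((i : ℕ) : ℝ))) atTop atTop :=
          tendsto_id.atTop_mul_const hslope
        have h2 := tendsto_atTop_add_const_right atTop
          (((ct i : ℝ) - (ct j : ℝ)) - (γ i : ℝ) + d + 1) h1
        refine h2.congr fun t => ?_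
        rw [hce]
        ring
      have hx : ∀ (d : ℝ), Tendsto (fun t => q ^ (c t i - c t j - (γ i : ℝ) + d + 1)) atTop
          (nhds 0) :=
        fun d => (tendsto_rpow_atTop_of_base_lt_one q (by linarith) hq1).comp (hE d)
      have hnum : ∀ (d : ℝ), Tendsto
          (fun t => qPochR q (q ^ (c t i - c t j - (γ i : ℝ) + d + 1)) (γ i)) atTop (nhds 1) := by
        intro d
        have := ((hcont (γ i)).tendsto 0).comp (hx d)
        rwa [hpoch0] at this
      have := (hnum (β j)).div (hnum (γ j)) one_ne_zero
      simpa [Pi.div_def] using this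
    · -- i = j : constant
      subst heq
      have hLij : Lfun q β γ i i = qBinomR q (β i) (γ i) := by simp [Lfun]
      rw [hLij]
      have hval : ∀ t : ℝ,
          qPochR q (q ^ (c t i - c t i - (γ i : ℝ) + (β i : ℝ) + 1)) (γ i) /
            qPochR q (q ^ (c t i - c t i - (γ i : ℝ) + (γ i : ℝ) + 1)) (γ i)
          = qBinomR q (β i) (γ i) := by
        intro t
        have e1 : c t i - c t i - (γ i : ℝ) + (β i : ℝ) + 1 = ((β i - γ i + 1 : ℕ) : ℝ) := by
          rw [Nat.cast_add, Nat.cast_sub (hγβ i), Nat.cast_one]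
          ring
        have e2 : c t i - c t i - (γ i : ℝ) + (γ i : ℝ) + 1 = 1 := by ring
        rw [e1, e2, Real.rpow_natCast, Real.rpow_one, qBinomR_eq q hq0 hq1 _ _ (hγβ i)]
      exact Tendsto.congr (fun t => (hval t).symm) tendsto_const_nhds
    · -- j < i
      have hLij : Lfun q β γ i j = q ^ (γ i * (β j - γ j)) := by
        simp [Lfun, hij.ne', hij]
      rw [hLij]
      -- D t → atBot
      have hslope : ((j : ℕ) : ℝ) - ((i : ℕ) : ℝ) < 0 := by
        have : (j : ℕ) < (i : ℕ) := hij
        have h2 : ((j : ℕ) : ℝ) < ((i : ℕ) : ℝ) := by exact_mod_cast this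
        linarith
      have hD : Tendsto (fun t => c t i - c t j - (γ i : ℝ) + 1) atTop atBot := by
        have h1 : Tendsto (fun t : ℝ => t * (((j : ℕ) : ℝ) - ((i : ℕ) : ℝ))) atTop atBot :=
          tendsto_id.atTop_mul_const_of_neg hslope
        have h2 := tendsto_atBot_add_const_right atTop
          (((ct i : ℝ) - (ct j : ℝ)) - (γ i : ℝ) + 1) h1
        refine h2.congr fun t => ?_
        rw [hce]
        ring
      have hu : Tendsto (fun t => q ^ (c t i - c t j - (γ i : ℝ) + 1)) atTop atTop :=
        (tendsto_rpow_atBot_of_base_lt_one q hq0 hq1).comp hD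
      -- the function G of u
      set G : ℝ → ℝ := fun u =>
        (∏ k ∈ Finset.range (γ i), (1 - u * q ^ (β j + k))) /
          (∏ k ∈ Finset.range (γ i), (1 - u * q ^ (γ j + k))) with hGdef
      have hG : Tendsto G atTop (nhds (q ^ (γ i * (β j - γ j)))) := by
        have hlim : ∀ k : ℕ, Tendsto
            (fun u : ℝ => (1 - u * q ^ (β j + k)) / (1 - u * q ^ (γ j + k))) atTop
            (nhds (q ^ (β j + k) / q ^ (γ j + k))) :=
          fun k => tendsto_ratio _ _ (pow_pos hq0 _)
        have := tendsto_finset_prod (f := fun (k : ℕ) (u : ℝ) =>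
            (1 - u * q ^ (β j + k)) / (1 - u * q ^ (γ j + k)))
          (Finset.range (γ i)) (fun k _ => hlim k)
        have hval : ∏ k ∈ Finset.range (γ i), (q ^ (β j + k) / q ^ (γ j + k))
            = q ^ (γ i * (β j - γ j)) := by
          have hfac : ∀ k, q ^ (β j + k) / q ^ (γ j + k) = q ^ (β j - γ j) := by
            intro k
            rw [div_eq_iff (pow_ne_zero _ hq0.ne'), ← pow_add]
            have := hγβ j
            congr 1
            omega
          rw [Finset.prod_congr rfl fun k _ => hfac k, Finset.prod_const,
            Finset.card_range, ← pow_mul, Nat.mul_comm]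
        rw [hval] at this
        refine this.congr fun u => ?_
        rw [hGdef]
        exact Finset.prod_div_distrib _ _
      have hrw : ∀ t : ℝ,
          qPochR q (q ^ (c t i - c t j - (γ i : ℝ) + (β j : ℝ) + 1)) (γ i) /
            qPochR q (q ^ (c t i - c t j - (γ i : ℝ) + (γ j : ℝ) + 1)) (γ i)
          = G (q ^ (c t i - c t j - (γ i : ℝ) + 1)) := by
        intro t
        rw [hGdef]
        have hfac : ∀ (b : ℕ) (k : ℕ),
            1 - q ^ (c t i - c t j - (γ i : ℝ) + (b : ℝ) + 1) * q ^ k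
            = 1 - q ^ (c t i - c t j - (γ i : ℝ) + 1) * q ^ (b + k) := by
          intro b k
          have hexp : c t i - c t j - (γ i : ℝ) + (b : ℝ) + 1
              = (c t i - c t j - (γ i : ℝ) + 1) + ((b : ℕ) : ℝ) := by ring
          rw [hexp, Real.rpow_add hq0, Real.rpow_natCast, pow_add]
          ring
        congr 1
        · exact Finset.prod_congr rfl fun k _ => hfac (β j) k
        · exact Finset.prod_congr rfl fun k _ => hfac (γ j) k
      exact Tendsto.congr (fun t => (hrw t).symm) (hG.comp hu)
  -- product convergence
  have hprod : Tendsto (fun t => ∏ i, ∏ j,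
      qPochR q (q ^ (c t i - c t j - (γ i : ℝ) + (β j : ℝ) + 1)) (γ i) /
        qPochR q (q ^ (c t i - c t j - (γ i : ℝ) + (γ j : ℝ) + 1)) (γ i)) atTop
      (nhds (∏ i, ∏ j, Lfun q β γ i j)) :=
    tendsto_finset_prod _ fun i _ => tendsto_finset_prod _ fun j _ => key i j
  have hSt : Tendsto S atTop (nhds ((qBinomR q m l)⁻¹ * ∏ i, ∏ j, Lfun q β γ i j)) := by
    refine Tendsto.congr (fun t => (hS t).symm) (hprod.const_mul _)
  -- compute the product of limits
  have hLsplit : ∀ i j, Lfun q β γ i j =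
      (if i = j then qBinomR q (β i) (γ i) else 1) *
        q ^ (if j < i then γ i * (β j - γ j) else 0) := by
    intro i j
    rcases eq_or_ne i j with rfl | hij
    · simp [Lfun]
    · rcases lt_or_ge j i with h | h
      · simp [Lfun, hij, h]
      · simp [Lfun, hij, not_lt.mpr h]
  have hLprod : ∏ i, ∏ j, Lfun q β γ i j =
      q ^ (∑ p ∈ Finset.univ.filter (fun p : Fin (n+1) × Fin (n+1) => p.1 < p.2),
          (β p.1 - γ p.1) * γ p.2) * ∏ i, qBinomR q (β i) (γ i) := by
    have h1 : ∏ i, ∏ j, Lfun q β γ i j =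
        (∏ i, ∏ j, (if i = j then qBinomR q (β i) (γ i) else 1)) *
          ∏ i, ∏ j, q ^ (if j < i then γ i * (β j - γ j) else 0) := by
      rw [← Finset.prod_mul_distrib]
      refine Finset.prod_congr rfl fun i _ => ?_
      rw [← Finset.prod_mul_distrib]
      exact Finset.prod_congr rfl fun j _ => hLsplit i j
    rw [h1]
    have h2 : (∏ i, ∏ j, (if i = j then qBinomR q (β i) (γ i) else 1)) =
        ∏ i, qBinomR q (β i) (γ i) := by
      refine Finset.prod_congr rfl fun i _ => ?_
      simp
    have h3 : (∏ i : Fin (n+1), ∏ j : Fin (n+1), q ^ (if j < i then γ i * (β j - γ j) else 0)) =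
        q ^ (∑ i : Fin (n+1), ∑ j : Fin (n+1), (if j < i then γ i * (β j - γ j) else 0)) := by
      rw [← Finset.prod_pow_eq_pow_sum]
      exact Finset.prod_congr rfl fun i _ => (Finset.prod_pow_eq_pow_sum _ _ _)
    have h4 : (∑ i : Fin (n+1), ∑ j : Fin (n+1), (if j < i then γ i * (β j - γ j) else 0)) =
        ∑ p ∈ Finset.univ.filter (fun p : Fin (n+1) × Fin (n+1) => p.1 < p.2),
          (β p.1 - γ p.1) * γ p.2 := by
      rw [Finset.sum_filter, Fintype.sum_prod_type, Finset.sum_comm]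
      refine Finset.sum_congr rfl fun j _ => Finset.sum_congr rfl fun i _ => ?_
      rcases lt_or_ge j i with h | h
      · simp [h, Nat.mul_comm]
      · simp [not_lt.mpr h, h]
    rw [h2, h3, h4]
    ring
  rw [hLprod] at hSt
  have hfin : (qBinomR q m l)⁻¹ *
      (q ^ (∑ p ∈ Finset.univ.filter (fun p : Fin (n+1) × Fin (n+1) => p.1 < p.2),
          (β p.1 - γ p.1) * γ p.2) * ∏ i, qBinomR q (β i) (γ i)) =
      q ^ (∑ p ∈ Finset.univ.filter (fun p : Fin (n+1) × Fin (n+1) => p.1 < p.2),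
          (β p.1 - γ p.1) * γ p.2) *
        (qBinomR q m l)⁻¹ * ∏ i, qBinomR q (β i) (γ i) := by ring
  rwa [hfin] at hSt
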